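/- The ring-supporting subsets U of ℤ with (U:U) = 3ℤ are exactly: 3ℤ, 3ℤ ∪ (3ℤ+1), and 3ℤ ∪ (3ℤ+2). -/

import Mathlib

/-- A subset `U` of an additive commutative group containing `0` is ring-supporting if
for all `u, v, w ∈ U` with `u + v + w ∈ U`, one has `u + v ∈ U ↔ v + w ∈ U`. -/
def AddRingSupporting {A : Type*} [AddCommGroup A] (U : Set A) : Prop :=
  (0 : A) ∈ U ∧ ∀ u ∈ U, ∀ v ∈ U, ∀ w ∈ U, u + v + w ∈ U → (u + v ∈ U ↔ v + w ∈ U)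

/-- The stabilizer `(U : U) = {a | a + U = U}` of a subset `U` of an additive group. -/
def AddStab {A : Type*} [AddCommGroup A] (U : Set A) : Set A :=
  {a : A | (a + ·) '' U = U}

lemma mem1 (x : ℤ) : x ∈ {x : ℤ | ∃ k : ℤ, x = 3 * k} ↔ x % 3 = 0 := by
  simp only [Set.mem_setOf_eq]
  constructor
  · rintro ⟨k, rfl⟩; omega
  · intro h; exact ⟨x / 3, by omega⟩

lemma mem2 (x : ℤ) : x ∈ {x : ℤ | ∃ k : ℤ, x = 3 * k ∨ x = 3 * k + 1} ↔
    x % 3 = 0 ∨ x % 3 = 1 := by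
  simp only [Set.mem_setOf_eq]
  constructor
  · rintro ⟨k, rfl | rfl⟩ <;> omega
  · intro h; exact ⟨x / 3, by omega⟩

lemma mem3 (x : ℤ) : x ∈ {x : ℤ | ∃ k : ℤ, x = 3 * k ∨ x = 3 * k + 2} ↔
    x % 3 = 0 ∨ x % 3 = 2 := by
  simp only [Set.mem_setOf_eq]
  constructor
  · rintro ⟨k, rfl | rfl⟩ <;> omega
  · intro h; exact ⟨x / 3, by omega⟩

lemma stab_iff (U : Set ℤ) (c : ℤ) :
    c ∈ AddStab U ↔ ∀ x, x ∈ U ↔ c + x ∈ U := by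
  unfold AddStab
  simp only [Set.mem_setOf_eq]
  constructor
  · intro h x
    constructor
    · intro hx; rw [← h]; exact ⟨x, hx, rfl⟩
    · intro hx
      have h2 : c + x ∈ (c + ·) '' U := by rw [h]; exact hx
      obtain ⟨y, hy, hyy⟩ := h2
      have : y = x := by simpa using hyy
      rwa [← this]
  · intro h
    ext z
    constructor
    · rintro ⟨y, hy, rfl⟩; exact (h y).1 hy
    · intro hz
      exact ⟨z - c, (h (z - c)).2 (by rwa [show c + (z - c) = z by ring]),
        by ring⟩

lemma periodic (U : Set ℤ) (h3 : ∀ x, x ∈ U ↔ 3 + x ∈ U) :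
    ∀ x : ℤ, x ∈ U ↔ x % 3 ∈ U := by
  have key : ∀ k : ℤ, ∀ x : ℤ, x ∈ U ↔ x + 3 * k ∈ U := by
    intro k
    induction k using Int.induction_on with
    | zero => simp
    | succ n ih =>
        intro x
        rw [ih x, h3 (x + 3 * n), show (3 : ℤ) + (x + 3 * n) = x + 3 * (n + 1) by ring]
    | pred n ih =>
        intro x
        rw [ih x, show x + 3 * (-(n : ℤ)) = 3 + (x + 3 * (-n - 1)) by ring, ← h3]
  intro x
  have := key (-(x / 3)) x
  rwa [show x + 3 * (-(x / 3)) = x % 3 by omega] at this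

theorem ringSupporting_stab_three (U : Set ℤ) :
    (AddRingSupporting U ∧ AddStab U = {m : ℤ | ∃ k : ℤ, m = 3 * k}) ↔
      (U = {x : ℤ | ∃ k : ℤ, x = 3 * k} ∨
        U = {x : ℤ | ∃ k : ℤ, x = 3 * k ∨ x = 3 * k + 1} ∨
        U = {x : ℤ | ∃ k : ℤ, x = 3 * k ∨ x = 3 * k + 2}) := by
  constructor
  · rintro ⟨⟨h0, -⟩, hstab⟩
    have h3 : (3 : ℤ) ∈ AddStab U := by rw [hstab]; exact ⟨1, by ring⟩
    have hper := periodic U ((stab_iff U 3).1 h3)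
    have h1n : (1 : ℤ) ∉ AddStab U := by rw [hstab]; rintro ⟨k, hk⟩; omega
    by_cases h1 : (1 : ℤ) ∈ U <;> by_cases h2 : (2 : ℤ) ∈ U
    · exfalso
      apply h1n
      have hall : ∀ x : ℤ, x ∈ U := by
        intro x
        rw [hper x]
        have : x % 3 = 0 ∨ x % 3 = 1 ∨ x % 3 = 2 := by omega
        rcases this with h | h | h <;> rw [h] <;> assumption
      rw [stab_iff]
      intro x
      exact ⟨fun _ => hall _, fun _ => hall _⟩
    · right; left
      ext x
      rw [mem2, hper x]
      have : x % 3 = 0 ∨ x % 3 = 1 ∨ x % 3 = 2 := by omega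
      rcases this with h | h | h <;> rw [h] <;> simp [h0, h1, h2]
    · right; right
      ext x
      rw [mem3, hper x]
      have : x % 3 = 0 ∨ x % 3 = 1 ∨ x % 3 = 2 := by omega
      rcases this with h | h | h <;> rw [h] <;> simp [h0, h1, h2]
    · left
      ext x
      rw [mem1, hper x]
      have : x % 3 = 0 ∨ x % 3 = 1 ∨ x % 3 = 2 := by omega
      rcases this with h | h | h <;> rw [h] <;> simp [h0, h1, h2]
  · rintro (rfl | rfl | rfl)
    · constructor
      · refine ⟨⟨0, by ring⟩, ?_⟩
        intro u hu v hv w hw hs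
        simp only [mem1] at hu hv hw hs ⊢
        omega
      · ext m
        rw [stab_iff, mem1]
        constructor
        · intro h
          have := (h 0).1 (by rw [mem1]; omega)
          rw [mem1] at this
          omega
        · intro h x
          rw [mem1, mem1]
          omega
    · constructor
      · refine ⟨⟨0, Or.inl (by ring)⟩, ?_⟩
        intro u hu v hv w hw hs
        simp only [mem2] at hu hv hw hs ⊢
        omega
      · ext m
        rw [stab_iff, mem1]
        constructor
        · intro h
          have a := (h 0).1 (by rw [mem2]; omega)
          have b := (h 1).1 (by rw [mem2]; omega)
          rw [mem2] at a b
          omega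
        · intro h x
          rw [mem2, mem2]
          omega
    · constructor
      · refine ⟨⟨0, Or.inl (by ring)⟩, ?_⟩
        intro u hu v hv w hw hs
        simp only [mem3] at hu hv hw hs ⊢
        omega
      · ext m
        rw [stab_iff, mem1]
        constructor
        · intro h
          have a := (h 0).1 (by rw [mem3]; omega)
          have b := (h 2).1 (by rw [mem3]; omega)
          rw [mem3] at a b
          omega
        · intro h x
          rw [mem3, mem3]
          omega
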